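/- Let X be a finite alphabet, P ∈ P_n a type of denominator n, and Q any distribution on X. Then the Q^n-probability of the type class T(P) satisfies (n+1)^{−|X|}·exp(−n·D(P‖Q)) ≤ Q^n(T(P)) ≤ exp(−n·D(P‖Q)). -/

import Mathlib

open Finset Nat


lemma prod_comp_eq_prod_pow {M X : Type*} [CommMonoid M] [Fintype X] [DecidableEq X] {n : ℕ}
    (x : Fin n → X) (f : X → M) :
    ∏ i, f (x i) = ∏ a, f a ^ (Finset.univ.filter fun i => x i = a).card := by
  rw [← Finset.prod_fiberwise_of_maps_to (fun i _ => Finset.mem_univ (x i)) (fun i => f (x i))]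
  refine Finset.prod_congr rfl fun a _ => ?_
  rw [Finset.prod_congr rfl (fun i hi => by rw [(Finset.mem_filter.1 hi).2]),
    Finset.prod_const]

lemma count_sum {X : Type*} [Fintype X] [DecidableEq X] {n : ℕ} (x : Fin n → X) :
    ∑ a, (Finset.univ.filter fun i => x i = a).card = n := by
  rw [← Finset.card_eq_sum_card_fiberwise (fun i _ => Finset.mem_univ (x i)),
    Finset.card_univ, Fintype.card_fin]

lemma fact_pow_le {k m : ℕ} : k ! * k ^ m ≤ m ! * k ^ k := by
  rcases le_total m k with h | h
  · have A : k ! ≤ m ! * k ^ (k - m) := by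
      induction k, h using Nat.le_induction with
      | base => simp
      | succ k hk ih =>
        have : k + 1 - m = (k - m) + 1 := by omega
        rw [this, Nat.factorial_succ, pow_succ]
        calc (k+1) * k ! ≤ (k+1) * (m ! * k ^ (k-m)) := Nat.mul_le_mul_left _ ih
          _ = m ! * (k ^ (k-m) * (k+1)) := by ring
          _ ≤ m ! * ((k+1) ^ (k-m) * (k+1)) :=
              Nat.mul_le_mul_left _ (Nat.mul_le_mul_right _ (Nat.pow_le_pow_left (by omega) _))
    calc k ! * k ^ m ≤ (m ! * k ^ (k - m)) * k ^ m := Nat.mul_le_mul_right _ A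
      _ = m ! * k ^ k := by rw [mul_assoc, ← pow_add]; congr 2; omega
  · have B : k ! * k ^ (m - k) ≤ m ! := by
      induction m, h using Nat.le_induction with
      | base => simp
      | succ m hm ih =>
        have : m + 1 - k = (m - k) + 1 := by omega
        rw [this, pow_succ, ← mul_assoc, Nat.factorial_succ]
        calc k ! * k ^ (m - k) * k ≤ m ! * (m+1) := Nat.mul_le_mul ih (by omega)
          _ = (m+1) * m ! := Nat.mul_comm _ _
    calc k ! * k ^ m = (k ! * k ^ (m - k)) * k ^ k := by
          rw [mul_assoc, ← pow_add]; congr 2; omega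
      _ ≤ m ! * k ^ k := Nat.mul_le_mul_right _ B

lemma card_typeclass {X : Type*} [Fintype X] [DecidableEq X] (n : ℕ) (d : X → ℕ)
    (hd : ∑ a, d a = n) :
    (Finset.univ.filter fun x : Fin n → X =>
        ∀ a, (Finset.univ.filter fun i => x i = a).card = d a).card
      = Nat.multinomial Finset.univ d := by
  classical
  have hmono : ∀ e : X → ℕ, (∏ a, (MvPolynomial.X a : MvPolynomial X ℕ) ^ e a)
      = MvPolynomial.monomial (Finsupp.equivFunOnFinite.symm e) 1 := by
    intro e
    rw [MvPolynomial.monomial_eq, MvPolynomial.C_1, one_mul,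
      Finsupp.prod_fintype _ _ (fun a => pow_zero _)]
    rfl
  have key : ∑ e ∈ piAntidiag (univ : Finset X) n,
      ((Finset.univ.filter fun x : Fin n → X =>
        ∀ a, (Finset.univ.filter fun i => x i = a).card = e a).card) •
        (MvPolynomial.monomial (Finsupp.equivFunOnFinite.symm e) (1:ℕ))
     = ∑ e ∈ piAntidiag (univ : Finset X) n,
        (Nat.multinomial Finset.univ e : MvPolynomial X ℕ) *
          (MvPolynomial.monomial (Finsupp.equivFunOnFinite.symm e) (1:ℕ)) := by
    have e1 : ((∑ a, MvPolynomial.X a : MvPolynomial X ℕ))^n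
        = ∑ x : Fin n → X, ∏ i, (MvPolynomial.X (x i) : MvPolynomial X ℕ) := by
      rw [Finset.sum_pow' univ (fun a => (MvPolynomial.X a : MvPolynomial X ℕ)) n,
        Fintype.piFinset_univ]
    have e2 : ∑ x : Fin n → X, ∏ i, (MvPolynomial.X (x i) : MvPolynomial X ℕ)
        = ∑ e ∈ piAntidiag (univ : Finset X) n,
            ∑ x ∈ (Finset.univ.filter fun x : Fin n → X =>
              ∀ a, (Finset.univ.filter fun i => x i = a).card = e a),
              ∏ i, (MvPolynomial.X (x i) : MvPolynomial X ℕ) := by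
      rw [← Finset.sum_fiberwise_of_maps_to
        (g := fun x : Fin n → X => fun a => (Finset.univ.filter fun i => x i = a).card)
        (fun x _ => Finset.mem_piAntidiag.mpr ⟨count_sum x, fun _ _ => Finset.mem_univ _⟩)
        (fun x => ∏ i, (MvPolynomial.X (x i) : MvPolynomial X ℕ))]
      refine Finset.sum_congr rfl fun e _ => Finset.sum_congr ?_ fun _ _ => rfl
      exact Finset.filter_congr fun x _ => by simp [funext_iff]
    have e3 : ∀ e : X → ℕ, ∑ x ∈ (Finset.univ.filter fun x : Fin n → X =>
              ∀ a, (Finset.univ.filter fun i => x i = a).card = e a),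
              ∏ i, (MvPolynomial.X (x i) : MvPolynomial X ℕ)
        = ((Finset.univ.filter fun x : Fin n → X =>
              ∀ a, (Finset.univ.filter fun i => x i = a).card = e a).card) •
            (MvPolynomial.monomial (Finsupp.equivFunOnFinite.symm e) (1:ℕ)) := by
      intro e
      rw [← Finset.sum_const]
      refine Finset.sum_congr rfl fun x hx => ?_
      rw [prod_comp_eq_prod_pow x, ← hmono]
      refine Finset.prod_congr rfl fun a _ => by
        rw [(Finset.mem_filter.1 hx).2 a]
    rw [← Finset.sum_congr rfl fun e _ => e3 e, ← e2, ← e1,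
      Finset.sum_pow_eq_sum_piAntidiag]
    refine Finset.sum_congr rfl fun e _ => ?_
    rw [hmono]
  have hco := congrArg (MvPolynomial.coeff (Finsupp.equivFunOnFinite.symm d)) key
  have hmem : d ∈ piAntidiag (univ : Finset X) n :=
    Finset.mem_piAntidiag.mpr ⟨hd, fun _ _ => Finset.mem_univ _⟩
  have hC : ∀ m : ℕ, ((m : MvPolynomial X ℕ)) = MvPolynomial.C (m : ℕ) :=
    fun m => (MvPolynomial.C_eq_coe_nat m).symm
  simp only [MvPolynomial.coeff_sum, MvPolynomial.coeff_smul, hC,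
    MvPolynomial.coeff_C_mul, MvPolynomial.coeff_monomial,
    EmbeddingLike.apply_eq_iff_eq, smul_eq_mul, mul_ite, mul_one, mul_zero] at hco
  rw [Finset.sum_ite_eq' _ d, Finset.sum_ite_eq' _ d, if_pos hmem, if_pos hmem] at hco
  exact hco

lemma sum_fiber_decomp {X : Type*} [Fintype X] [DecidableEq X] {M : Type*} [AddCommMonoid M]
    (n : ℕ) (f : (Fin n → X) → M) :
    ∑ x : Fin n → X, f x
    = ∑ e ∈ Finset.piAntidiag (Finset.univ : Finset X) n,
        ∑ x ∈ (Finset.univ.filter fun x : Fin n → X =>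
          ∀ a, (Finset.univ.filter fun i => x i = a).card = e a), f x := by
  rw [← Finset.sum_fiberwise_of_maps_to
    (g := fun x : Fin n → X => fun a => (Finset.univ.filter fun i => x i = a).card)
    (fun x _ => Finset.mem_piAntidiag.mpr ⟨count_sum x, fun _ _ => Finset.mem_univ _⟩) f]
  refine Finset.sum_congr rfl fun e _ => Finset.sum_congr ?_ fun _ _ => rfl
  exact Finset.filter_congr fun x _ => by simp [funext_iff]

lemma typeclass_sum_eq {X : Type*} [Fintype X] [DecidableEq X] (n : ℕ) (q : X → ℝ) (d : X → ℕ) :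
    ∑ x ∈ (Finset.univ.filter fun x : Fin n → X =>
        ∀ a, (Finset.univ.filter fun i => x i = a).card = d a), ∏ i, q (x i)
    = ((Finset.univ.filter fun x : Fin n → X =>
        ∀ a, (Finset.univ.filter fun i => x i = a).card = d a).card : ℝ) * ∏ a, q a ^ d a := by
  rw [Finset.sum_congr rfl (fun x hx => show ∏ i, q (x i) = ∏ a, q a ^ d a from ?_),
    Finset.sum_const, nsmul_eq_mul]
  rw [prod_comp_eq_prod_pow x q]
  exact Finset.prod_congr rfl fun a _ => by rw [(Finset.mem_filter.1 hx).2 a]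

lemma multinomial_count_le {X : Type*} [Fintype X] [DecidableEq X] {n : ℕ}
    (c d : X → ℕ) (hc : ∑ a, c a = n) (hd : ∑ a, d a = n) :
    Nat.multinomial Finset.univ d * ∏ a, c a ^ d a
      ≤ Nat.multinomial Finset.univ c * ∏ a, c a ^ c a := by
  have e1 : (∏ a, (d a)!) * Nat.multinomial Finset.univ d = n ! := by
    rw [Nat.multinomial_spec, hd]
  have e2 : (∏ a, (c a)!) * Nat.multinomial Finset.univ c = n ! := by
    rw [Nat.multinomial_spec, hc]
  have hfact : ∏ a, ((c a)! * c a ^ d a) ≤ ∏ a, ((d a)! * c a ^ c a) :=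
    Finset.prod_le_prod' fun a _ => fact_pow_le
  have hpos : 0 < (∏ a, (d a)!) * (∏ a, (c a)!) :=
    Nat.mul_pos (Finset.prod_pos fun a _ => Nat.factorial_pos _)
      (Finset.prod_pos fun a _ => Nat.factorial_pos _)
  refine Nat.le_of_mul_le_mul_left ?_ hpos
  calc ((∏ a, (d a)!) * (∏ a, (c a)!)) * (Nat.multinomial Finset.univ d * ∏ a, c a ^ d a)
      = n ! * ∏ a, ((c a)! * c a ^ d a) := by
        rw [Finset.prod_mul_distrib, ← e1]; ring
    _ ≤ n ! * ∏ a, ((d a)! * c a ^ c a) := Nat.mul_le_mul_left _ hfact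
    _ = ((∏ a, (d a)!) * (∏ a, (c a)!)) * (Nat.multinomial Finset.univ c * ∏ a, c a ^ c a) := by
        rw [Finset.prod_mul_distrib, ← e2]; ring

/-- For a type `P ∈ P_n` (counts `c : X → ℕ`, `∑ₐ c a = n`,
`P a = c a / n`) and any distribution `Q` on `X` with `P ≪ Q`, the `Q^n`-probability of
the type class `T(P)` satisfies
`(n+1)^{−|X|}·exp(−n·D(P‖Q)) ≤ Q^n(T(P)) ≤ exp(−n·D(P‖Q))`,
where `D(P‖Q) = ∑ₐ P(a) log (P(a)/Q(a))` (natural logarithm). -/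

theorem type_class_probability_bounds
    {X : Type*} [Fintype X] [DecidableEq X] (n : ℕ) (hn : 0 < n)
    (c : X → ℕ) (hc : ∑ a, c a = n)
    (P : X → ℝ) (hP : ∀ a, P a = (c a : ℝ) / n)
    (Q : X → ℝ) (hQnonneg : ∀ a, 0 ≤ Q a) (hQsum : ∑ a, Q a = 1)
    (habs : ∀ a, Q a = 0 → c a = 0)
    (D : ℝ) (hD : D = ∑ a, P a * Real.log (P a / Q a)) :
    ((n + 1 : ℝ) ^ Fintype.card X)⁻¹ * Real.exp (-(n : ℝ) * D) ≤
      ∑ x ∈ (Finset.univ.filter fun x : Fin n → X =>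
          ∀ a, (Finset.univ.filter fun i => x i = a).card = c a), ∏ i, Q (x i) ∧
    ∑ x ∈ (Finset.univ.filter fun x : Fin n → X =>
        ∀ a, (Finset.univ.filter fun i => x i = a).card = c a), ∏ i, Q (x i) ≤
      Real.exp (-(n : ℝ) * D) := by
  have hn' : (n : ℝ) ≠ 0 := Nat.cast_ne_zero.mpr hn.ne'
  have hPnonneg : ∀ a, 0 ≤ P a := fun a => by
    rw [hP a]; positivity
  -- the key product identity
  have hK : ∏ a, Q a ^ c a = Real.exp (-(n : ℝ) * D) * ∏ a, P a ^ c a := by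
    have hnD : -(n : ℝ) * D = ∑ a, (-(c a : ℝ)) * Real.log (P a / Q a) := by
      rw [hD, Finset.mul_sum]
      refine Finset.sum_congr rfl fun a _ => ?_
      rw [hP a]
      field_simp
    rw [hnD, Real.exp_sum, ← Finset.prod_mul_distrib]
    refine Finset.prod_congr rfl fun a _ => ?_
    by_cases hca : c a = 0
    · simp [hca]
    · have hQa : 0 < Q a := lt_of_le_of_ne (hQnonneg a)
        (fun h => hca (habs a h.symm))
      have hPa : 0 < P a := by
        rw [hP a]
        have : 0 < (c a : ℝ) := Nat.cast_pos.mpr (Nat.pos_of_ne_zero hca)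
        positivity
      have : (-(c a : ℝ)) * Real.log (P a / Q a) = (c a : ℝ) * Real.log (Q a / P a) := by
        rw [show P a / Q a = (Q a / P a)⁻¹ by rw [inv_div], Real.log_inv]
        ring
      rw [this, Real.exp_nat_mul, Real.exp_log (by positivity), ← mul_pow,
        div_mul_cancel₀ _ hPa.ne']
  -- sum over the type class of a product of q's
  have hSQ := typeclass_sum_eq n Q c
  have hSP := typeclass_sum_eq n P c
  have hPsum : ∑ a, P a = 1 := by
    rw [Finset.sum_congr rfl fun a _ => hP a, ← Finset.sum_div, ← Nat.cast_sum, hc, div_self hn']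
  have htotal : ∑ x : Fin n → X, ∏ i, P (x i) = 1 := by
    rw [← Fintype.piFinset_univ, ← Finset.sum_pow' Finset.univ P n, hPsum, one_pow]
  -- relation between Q-sum and P-sum
  have hrel : ∑ x ∈ (Finset.univ.filter fun x : Fin n → X =>
        ∀ a, (Finset.univ.filter fun i => x i = a).card = c a), ∏ i, Q (x i)
      = Real.exp (-(n : ℝ) * D) *
        ∑ x ∈ (Finset.univ.filter fun x : Fin n → X =>
        ∀ a, (Finset.univ.filter fun i => x i = a).card = c a), ∏ i, P (x i) := by
    rw [hSQ, hSP, hK]; ring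
  have hSPle : ∑ x ∈ (Finset.univ.filter fun x : Fin n → X =>
        ∀ a, (Finset.univ.filter fun i => x i = a).card = c a), ∏ i, P (x i) ≤ 1 := by
    rw [← htotal]
    exact Finset.sum_le_sum_of_subset_of_nonneg (Finset.filter_subset _ _)
      (fun x _ _ => Finset.prod_nonneg fun i _ => hPnonneg (x i))
  -- lower bound on the P-probability of T(c)
  have hmax : ∀ d ∈ Finset.piAntidiag (Finset.univ : Finset X) n,
      ∑ x ∈ (Finset.univ.filter fun x : Fin n → X =>
        ∀ a, (Finset.univ.filter fun i => x i = a).card = d a), ∏ i, P (x i)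
      ≤ ∑ x ∈ (Finset.univ.filter fun x : Fin n → X =>
        ∀ a, (Finset.univ.filter fun i => x i = a).card = c a), ∏ i, P (x i) := by
    intro d hd
    have hd' : ∑ a, d a = n := (Finset.mem_piAntidiag.mp hd).1
    rw [typeclass_sum_eq, typeclass_sum_eq, card_typeclass n d hd', card_typeclass n c hc]
    have hPd : ∏ a, P a ^ d a = (∏ a, (c a : ℝ) ^ d a) / (n : ℝ) ^ n := by
      rw [Finset.prod_congr rfl fun a _ => by rw [hP a, div_pow],
        Finset.prod_div_distrib, Finset.prod_pow_eq_pow_sum, hd']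
    have hPc : ∏ a, P a ^ c a = (∏ a, (c a : ℝ) ^ c a) / (n : ℝ) ^ n := by
      rw [Finset.prod_congr rfl fun a _ => by rw [hP a, div_pow],
        Finset.prod_div_distrib, Finset.prod_pow_eq_pow_sum, hc]
    rw [hPd, hPc, mul_div_assoc', mul_div_assoc', div_le_div_iff_of_pos_right (by positivity)]
    have := multinomial_count_le c d hc hd'
    calc (Nat.multinomial Finset.univ d : ℝ) * ∏ a, (c a : ℝ) ^ d a
        = ((Nat.multinomial Finset.univ d * ∏ a, c a ^ d a : ℕ) : ℝ) := by push_cast; ring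
      _ ≤ ((Nat.multinomial Finset.univ c * ∏ a, c a ^ c a : ℕ) : ℝ) := Nat.cast_le.mpr this
      _ = (Nat.multinomial Finset.univ c : ℝ) * ∏ a, (c a : ℝ) ^ c a := by push_cast; ring
  have hcardAnti : ((Finset.piAntidiag (Finset.univ : Finset X) n).card : ℝ)
      ≤ (n + 1 : ℝ) ^ Fintype.card X := by
    have hsub : Finset.piAntidiag (Finset.univ : Finset X) n ⊆
        Fintype.piFinset fun _ : X => Finset.range (n + 1) := by
      intro d hd
      have hd' : ∑ a, d a = n := (Finset.mem_piAntidiag.mp hd).1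
      refine Fintype.mem_piFinset.mpr fun a => Finset.mem_range.mpr ?_
      have : d a ≤ n := hd' ▸ Finset.single_le_sum (fun a _ => Nat.zero_le _) (Finset.mem_univ a)
      omega
    calc ((Finset.piAntidiag (Finset.univ : Finset X) n).card : ℝ)
        ≤ ((Fintype.piFinset fun _ : X => Finset.range (n + 1)).card : ℝ) :=
          Nat.cast_le.mpr (Finset.card_le_card hsub)
      _ = (n + 1 : ℝ) ^ Fintype.card X := by
          rw [Fintype.card_piFinset]
          push_cast
          simp [Finset.card_range]
  have hone : (1 : ℝ) ≤ ((Finset.piAntidiag (Finset.univ : Finset X) n).card : ℝ) *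
      ∑ x ∈ (Finset.univ.filter fun x : Fin n → X =>
        ∀ a, (Finset.univ.filter fun i => x i = a).card = c a), ∏ i, P (x i) := by
    calc (1 : ℝ) = ∑ x : Fin n → X, ∏ i, P (x i) := htotal.symm
      _ = ∑ d ∈ Finset.piAntidiag (Finset.univ : Finset X) n,
          ∑ x ∈ (Finset.univ.filter fun x : Fin n → X =>
            ∀ a, (Finset.univ.filter fun i => x i = a).card = d a), ∏ i, P (x i) :=
          sum_fiber_decomp n _
      _ ≤ _ := by
          rw [← nsmul_eq_mul]
          exact Finset.sum_le_card_nsmul _ _ _ hmax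
  have hSPnonneg : 0 ≤ ∑ x ∈ (Finset.univ.filter fun x : Fin n → X =>
        ∀ a, (Finset.univ.filter fun i => x i = a).card = c a), ∏ i, P (x i) :=
    Finset.sum_nonneg fun x _ => Finset.prod_nonneg fun i _ => hPnonneg (x i)
  have hSPge : ((n + 1 : ℝ) ^ Fintype.card X)⁻¹ ≤
      ∑ x ∈ (Finset.univ.filter fun x : Fin n → X =>
        ∀ a, (Finset.univ.filter fun i => x i = a).card = c a), ∏ i, P (x i) := by
    have hpow : (0 : ℝ) < (n + 1 : ℝ) ^ Fintype.card X := by positivity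
    rw [inv_le_iff_one_le_mul₀ hpow]
    calc (1 : ℝ) ≤ _ := hone
      _ ≤ ((n + 1 : ℝ) ^ Fintype.card X) *
          ∑ x ∈ (Finset.univ.filter fun x : Fin n → X =>
            ∀ a, (Finset.univ.filter fun i => x i = a).card = c a), ∏ i, P (x i) :=
          mul_le_mul_of_nonneg_right hcardAnti hSPnonneg
      _ = _ := mul_comm _ _
  constructor
  · rw [hrel]
    calc ((n + 1 : ℝ) ^ Fintype.card X)⁻¹ * Real.exp (-(n : ℝ) * D)
        = Real.exp (-(n : ℝ) * D) * ((n + 1 : ℝ) ^ Fintype.card X)⁻¹ := by ring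
      _ ≤ _ := mul_le_mul_of_nonneg_left hSPge (Real.exp_nonneg _)
  · rw [hrel]
    calc Real.exp (-(n : ℝ) * D) *
          ∑ x ∈ (Finset.univ.filter fun x : Fin n → X =>
            ∀ a, (Finset.univ.filter fun i => x i = a).card = c a), ∏ i, P (x i)
        ≤ Real.exp (-(n : ℝ) * D) * 1 := mul_le_mul_of_nonneg_left hSPle (Real.exp_nonneg _)
      _ = _ := mul_one _
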